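/- A tree T does not admit a perfect matching if and only if Staller has a winning strategy in the Staller-start Maker-Breaker domination game on T (i.e., γ'_SMB(T) < ∞). -/

import Mathlib

open scoped Classical

open scoped Classical

noncomputable section

/-- Minimax value of the Maker–Breaker game on hypergraph with edge set `E`:
`mbVal E t M B` is the minimum number of further moves Maker needs to claim all
vertices of some hyperedge (Maker has claimed `M`, Breaker has claimed `B`,
`t = true` iff Maker moves next), under optimal play; `⊤` if Maker cannot win. -/
def mbVal {V : Type} [Fintype V] (E : Set (Finset V)) :
    Bool → Finset V → Finset V → ℕ∞
  | true, M, B =>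
      if ∃ e ∈ E, e ⊆ M then 0
      else ⨅ v ∈ Finset.univ \ (M ∪ B), (1 + mbVal E false (insert v M) B)
  | false, M, B =>
      if ∃ e ∈ E, e ⊆ M then 0
      else if Finset.univ \ (M ∪ B) = ∅ then ⊤
      else ⨆ v ∈ Finset.univ \ (M ∪ B), mbVal E true M (insert v B)
termination_by _t M B => (Finset.univ \ (M ∪ B)).card
decreasing_by
  all_goals
    apply Finset.card_lt_card
    rw [Finset.ssubset_iff_of_subset]
    · refine ⟨v, ‹_›, by simp⟩
    · intro x hx
      simp only [Finset.mem_sdiff, Finset.mem_univ, true_and, Finset.mem_union,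
        Finset.mem_insert] at hx ⊢
      tauto

/-- The closed neighborhood of `v` as a finset. -/
def closedNbhdFinset {V : Type} [Fintype V] (G : SimpleGraph V) (v : V) : Finset V :=
  Finset.univ.filter (fun w => w = v ∨ G.Adj v w)

/-- The closed neighborhood hypergraph of a graph. -/
def nbhdHyp {V : Type} [Fintype V] (G : SimpleGraph V) : Set (Finset V) :=
  Set.range (closedNbhdFinset G)

/-- `γ'_SMB(G)`: the number of moves Staller (= Maker on the closed neighborhood
hypergraph, moving first) needs to win the Maker–Breaker domination game on `G`. -/
def gammaSMB' {V : Type} [Fintype V] (G : SimpleGraph V) : ℕ∞ :=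
  mbVal (nbhdHyp G) true ∅ ∅

end


noncomputable section
open Finset

namespace MBAux
set_option linter.unusedSectionVars false

theorem mbVal_true {V : Type} [Fintype V] (E : Set (Finset V)) (M B : Finset V) :
    mbVal E true M B = if ∃ e ∈ E, e ⊆ M then 0
      else ⨅ v ∈ Finset.univ \ (M ∪ B), (1 + mbVal E false (insert v M) B) := by
  rw [mbVal]

theorem mbVal_false {V : Type} [Fintype V] (E : Set (Finset V)) (M B : Finset V) :
    mbVal E false M B = if ∃ e ∈ E, e ⊆ M then 0
      else if Finset.univ \ (M ∪ B) = ∅ then ⊤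
      else ⨆ v ∈ Finset.univ \ (M ∪ B), mbVal E true M (insert v B) := by
  rw [mbVal]

variable {V : Type} [Fintype V] (T : SimpleGraph V)

lemma avail_card_lt_left {M B : Finset V} {v : V} (hv : v ∈ univ \ (M ∪ B)) :
    (univ \ (insert v M ∪ B)).card < (univ \ (M ∪ B)).card := by
  apply Finset.card_lt_card
  rw [Finset.ssubset_iff_of_subset]
  · exact ⟨v, hv, by simp⟩
  · intro x hx
    simp only [Finset.mem_sdiff, Finset.mem_univ, true_and, Finset.mem_union,
      Finset.mem_insert] at hx ⊢
    tauto

lemma avail_card_lt_right {M B : Finset V} {v : V} (hv : v ∈ univ \ (M ∪ B)) :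
    (univ \ (M ∪ insert v B)).card < (univ \ (M ∪ B)).card := by
  apply Finset.card_lt_card
  rw [Finset.ssubset_iff_of_subset]
  · exact ⟨v, hv, by simp⟩
  · intro x hx
    simp only [Finset.mem_sdiff, Finset.mem_univ, true_and, Finset.mem_union,
      Finset.mem_insert] at hx ⊢
    tauto

theorem breaker_pairing (E : Set (Finset V)) (f : V → V)
    (hinv : ∀ v, f (f v) = v) (hne : ∀ v, f v ≠ v)
    (hedge : ∀ e ∈ E, ∃ v ∈ e, f v ∈ e) :
    ∀ n : ℕ, ∀ M B : Finset V, (univ \ (M ∪ B)).card ≤ n →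
      ((Disjoint M B ∧ ∀ v ∈ M, f v ∈ B) → mbVal E true M B = ⊤) ∧
      ((Disjoint M B ∧ ∃ x ∈ M, (∀ v ∈ M, v ≠ x → f v ∈ B) ∧
          (f x ∈ B ∨ (f x ∉ M ∧ f x ∉ B))) → mbVal E false M B = ⊤) := by
  intro n
  induction n using Nat.strong_induction_on with
  | _ n ih =>
  intro M B hcard
  constructor
  · rintro ⟨hd, hI⟩
    have hno : ¬ ∃ e ∈ E, e ⊆ M := by
      rintro ⟨e, he, hsub⟩
      obtain ⟨v, hv, hfv⟩ := hedge e he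
      exact (Finset.disjoint_left.mp hd (hsub hfv) (hI v (hsub hv)))
    rw [mbVal_true, if_neg hno]
    rw [iInf_eq_top]
    intro v
    rw [iInf_eq_top]
    intro hv
    have hvM : v ∉ M := by simp only [mem_sdiff, mem_union] at hv; tauto
    have hvB : v ∉ B := by simp only [mem_sdiff, mem_union] at hv; tauto
    have hrec : mbVal E false (insert v M) B = ⊤ := by
      refine (ih _ (lt_of_lt_of_le (avail_card_lt_left hv) hcard) _ _ le_rfl).2 ?_
      refine ⟨by simp [Finset.disjoint_insert_left, hvB, hd], v, by simp, ?_, ?_⟩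
      · intro w hw hwv
        exact hI w (by simp at hw; tauto)
      · by_cases hb : f v ∈ B
        · exact Or.inl hb
        · refine Or.inr ⟨?_, hb⟩
          simp only [Finset.mem_insert]
          push_neg
          refine ⟨hne v, fun hm => ?_⟩
          exact hvB (hinv v ▸ hI (f v) hm)
    rw [hrec]
    simp
  · rintro ⟨hd, x, hxM, hxrest, hor⟩
    have hno : ¬ ∃ e ∈ E, e ⊆ M := by
      rintro ⟨e, he, hsub⟩
      obtain ⟨v, hv, hfv⟩ := hedge e he
      have hvM := hsub hv
      have hfvM := hsub hfv
      by_cases hvx : v = x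
      · subst hvx
        rcases hor with h | h
        · exact Finset.disjoint_left.mp hd hfvM h
        · exact h.1 hfvM
      · exact Finset.disjoint_left.mp hd hfvM (hxrest v hvM hvx)
    rw [mbVal_false, if_neg hno]
    by_cases hav : univ \ (M ∪ B) = ∅
    · rw [if_pos hav]
    rw [if_neg hav]
    have key : ∃ v ∈ univ \ (M ∪ B), Disjoint M (insert v B) ∧ ∀ w ∈ M, f w ∈ insert v B := by
      rcases hor with h | ⟨hfxM, hfxB⟩
      · obtain ⟨v, hv⟩ := Finset.nonempty_iff_ne_empty.mpr hav
        have hvM : v ∉ M := by simp only [mem_sdiff, mem_union] at hv; tauto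
        refine ⟨v, hv, by simp [Finset.disjoint_insert_right, hvM, hd], ?_⟩
        intro w hw
        by_cases hwx : w = x
        · subst hwx; exact Finset.mem_insert_of_mem h
        · exact Finset.mem_insert_of_mem (hxrest w hw hwx)
      · refine ⟨f x, by simp [mem_sdiff, mem_union, hfxM, hfxB],
          by simp [Finset.disjoint_insert_right, hfxM, hd], ?_⟩
        intro w hw
        by_cases hwx : w = x
        · subst hwx; exact Finset.mem_insert_self _ _
        · exact Finset.mem_insert_of_mem (hxrest w hw hwx)
    obtain ⟨v, hv, hd', hI'⟩ := key
    have hrec : mbVal E true M (insert v B) = ⊤ :=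
      (ih _ (lt_of_lt_of_le (avail_card_lt_right hv) hcard) _ _ le_rfl).1 ⟨hd', hI'⟩
    rw [eq_top_iff]
    calc (⊤ : ℕ∞) = mbVal E true M (insert v B) := hrec.symm
    _ ≤ _ := le_iSup₂ (f := fun v _ => mbVal E true M (insert v B)) v hv

/-- Simulation lemma: playing a harder "virtual" game on a subboard `S` bounds the real game. -/
theorem mbVal_sim (E F : Set (Finset V)) (S : Finset V) :
    ∀ n : ℕ, ∀ t : Bool, ∀ M B M' B' : Finset V, (univ \ (M ∪ B)).card ≤ n →
      M' ⊆ M → M ∩ S ⊆ M' → B ∩ S ⊆ B' → Sᶜ ⊆ B' →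
      (∀ f ∈ F, ∃ e ∈ E, e ⊆ f ∪ M) →
      mbVal E t M B ≤ mbVal F t M' B' := by
  intro n
  induction n using Nat.strong_induction_on with
  | _ n ih =>
  intro t M B M' B' hcard hM'M hMS hBS hSc hedge
  have havsub : univ \ (M' ∪ B') ⊆ univ \ (M ∪ B) := by
    intro v hv
    simp only [mem_sdiff, mem_union, mem_univ, true_and, not_or] at hv ⊢
    have hvS : v ∈ S := by
      by_contra hvS
      exact hv.2 (hSc (by simpa using hvS))
    exact ⟨fun hvM => hv.1 (hMS (mem_inter.mpr ⟨hvM, hvS⟩)),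
      fun hvB => hv.2 (hBS (mem_inter.mpr ⟨hvB, hvS⟩))⟩
  cases t
  · by_cases hM'win : ∃ f ∈ F, f ⊆ M'
    · obtain ⟨f, hf, hsub⟩ := hM'win
      obtain ⟨e, he, hesub⟩ := hedge f hf
      have : e ⊆ M := hesub.trans (by
        intro x hx
        rcases mem_union.mp hx with h | h
        · exact hM'M (hsub h)
        · exact h)
      rw [mbVal_false E, if_pos ⟨e, he, this⟩]
      exact zero_le
    rw [mbVal_false F, if_neg hM'win]
    by_cases hEwin : ∃ e ∈ E, e ⊆ M
    · rw [mbVal_false E, if_pos hEwin]; exact zero_le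
    by_cases hreal : univ \ (M ∪ B) = ∅
    · have : univ \ (M' ∪ B') = ∅ :=
        Finset.eq_empty_of_forall_notMem fun v hv => by
          rw [hreal] at havsub; exact absurd (havsub hv) (Finset.notMem_empty v)
      rw [this, if_pos rfl]
      exact le_top
    by_cases hvirt : univ \ (M' ∪ B') = ∅
    · rw [if_pos hvirt]; exact le_top
    rw [if_neg hvirt]
    rw [mbVal_false E, if_neg hEwin, if_neg hreal]
    apply iSup₂_le
    intro u hu
    have huM : u ∉ M := by simp only [mem_sdiff, mem_union] at hu; tauto
    have huB : u ∉ B := by simp only [mem_sdiff, mem_union] at hu; tauto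
    have key : ∃ w ∈ univ \ (M' ∪ B'), (insert u B) ∩ S ⊆ insert w B' := by
      by_cases huv : u ∈ univ \ (M' ∪ B')
      · refine ⟨u, huv, ?_⟩
        intro x hx
        simp only [mem_inter, Finset.mem_insert] at hx
        rcases hx.1 with h | h
        · subst h; exact Finset.mem_insert_self _ _
        · exact Finset.mem_insert_of_mem (hBS (mem_inter.mpr ⟨h, hx.2⟩))
      · obtain ⟨w, hw⟩ := Finset.nonempty_iff_ne_empty.mpr hvirt
        refine ⟨w, hw, ?_⟩
        have huB' : u ∈ B' := by
          by_cases hM' : u ∈ M'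
          · exact absurd (hM'M hM') huM
          · simp only [mem_sdiff, mem_union, mem_univ, true_and, not_or] at huv
            tauto
        intro x hx
        simp only [mem_inter, Finset.mem_insert] at hx
        rcases hx.1 with h | h
        · subst h; exact Finset.mem_insert_of_mem huB'
        · exact Finset.mem_insert_of_mem (hBS (mem_inter.mpr ⟨h, hx.2⟩))
    obtain ⟨w, hw, hw2⟩ := key
    calc mbVal E true M (insert u B)
        ≤ mbVal F true M' (insert w B') := by
          apply ih _ (lt_of_lt_of_le (avail_card_lt_right hu) hcard) true M (insert u B) M'
            (insert w B') le_rfl hM'M hMS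
          · exact hw2
          · exact hSc.trans (Finset.subset_insert _ _)
          · exact hedge
      _ ≤ _ := le_iSup₂ (f := fun w _ => mbVal F true M' (insert w B')) w hw
  · by_cases hEwin : ∃ e ∈ E, e ⊆ M
    · rw [mbVal_true E, if_pos hEwin]; exact zero_le
    by_cases hM'win : ∃ f ∈ F, f ⊆ M'
    · obtain ⟨f, hf, hsub⟩ := hM'win
      obtain ⟨e, he, hesub⟩ := hedge f hf
      exact absurd ⟨e, he, hesub.trans (Finset.union_subset (hsub.trans hM'M) le_rfl)⟩ hEwin
    rw [mbVal_true E, if_neg hEwin, mbVal_true F, if_neg hM'win]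
    apply le_iInf₂
    intro v hv
    have hv' : v ∈ univ \ (M ∪ B) := havsub hv
    refine le_trans (iInf₂_le v hv') ?_
    gcongr
    apply ih _ (lt_of_lt_of_le (avail_card_lt_left hv') hcard) false (insert v M) B
      (insert v M') B' le_rfl
    · exact Finset.insert_subset_insert _ hM'M
    · intro x hx
      simp only [mem_inter, Finset.mem_insert] at hx ⊢
      rcases hx.1 with h | h
      · exact Or.inl h
      · exact Or.inr (hMS (mem_inter.mpr ⟨h, hx.2⟩))
    · exact hBS
    · exact hSc
    · intro f hf
      obtain ⟨e, he, hesub⟩ := hedge f hf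
      exact ⟨e, he, hesub.trans
        (by intro x hx; simp only [Finset.mem_union, Finset.mem_insert] at hx ⊢; tauto)⟩

/-! ### Graph infrastructure -/

def nbhdIn (S : Finset V) (v : V) : Finset V :=
  (Finset.univ.filter (fun w => w = v ∨ T.Adj v w)) ∩ S

def hypIn (S : Finset V) : Set (Finset V) := {e | ∃ v ∈ S, e = nbhdIn T S v}

lemma mem_nbhdIn {S : Finset V} {v x : V} :
    x ∈ nbhdIn T S v ↔ (x = v ∨ T.Adj v x) ∧ x ∈ S := by
  simp [nbhdIn, Finset.mem_inter, Finset.mem_filter]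

def stepIn (S : Finset V) (a b : V) : Prop := T.Adj a b ∧ a ∈ S ∧ b ∈ S

def reachIn (S : Finset V) : V → V → Prop := Relation.ReflTransGen (stepIn T S)

lemma reachIn_symm {S : Finset V} {a b : V} (h : reachIn T S a b) : reachIn T S b a :=
  by
    haveI : Std.Symm (stepIn T S) := ⟨fun _ _ hxy => ⟨hxy.1.symm, hxy.2.2, hxy.2.1⟩⟩
    exact (inferInstance : Std.Symm (Relation.ReflTransGen (stepIn T S))).symm _ _ h

def connIn (S : Finset V) : Prop := ∀ v ∈ S, ∀ w ∈ S, reachIn T S v w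

def pmOn (S : Finset V) : Prop :=
  ∃ f : V → V, ∀ v ∈ S, f v ∈ S ∧ T.Adj v (f v) ∧ f (f v) = v

def comp (S : Finset V) (v : V) : Finset V := S.filter (fun w => reachIn T S v w)

lemma comp_subset {S : Finset V} {v : V} : comp T S v ⊆ S := Finset.filter_subset _ _

lemma mem_comp {S : Finset V} {v w : V} : w ∈ comp T S v ↔ w ∈ S ∧ reachIn T S v w := by
  simp [comp, Finset.mem_filter]

lemma mem_comp_self {S : Finset V} {v : V} (hv : v ∈ S) : v ∈ comp T S v :=
  (mem_comp T).mpr ⟨hv, Relation.ReflTransGen.refl⟩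

lemma comp_eq {S : Finset V} {v x : V} (hx : x ∈ comp T S v) : comp T S x = comp T S v := by
  rw [mem_comp] at hx
  ext w
  rw [mem_comp, mem_comp]
  constructor
  · rintro ⟨hw, hr⟩; exact ⟨hw, hx.2.trans hr⟩
  · rintro ⟨hw, hr⟩; exact ⟨hw, (reachIn_symm T hx.2).trans hr⟩

lemma comp_closed {S : Finset V} {v w x : V} (hw : w ∈ comp T S v) (hadj : T.Adj w x)
    (hx : x ∈ S) : x ∈ comp T S v := by
  rw [mem_comp] at hw ⊢
  exact ⟨hx, hw.2.tail ⟨hadj, hw.1, hx⟩⟩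

lemma reachIn_comp {S : Finset V} {v a b : V} (h : reachIn T S a b) (hva : reachIn T S v a) :
    reachIn T (comp T S v) a b := by
  induction h with
  | refl => exact Relation.ReflTransGen.refl
  | @tail x y h1 h2 ih =>
      refine ih.tail ⟨h2.1, ?_, ?_⟩
      · rw [mem_comp]; exact ⟨h2.2.1, hva.trans h1⟩
      · rw [mem_comp]; exact ⟨h2.2.2, (hva.trans h1).tail h2⟩

lemma connIn_comp {S : Finset V} {v : V} : connIn T (comp T S v) := by
  intro a ha b hb
  rw [mem_comp] at ha hb
  exact reachIn_comp T ((reachIn_symm T ha.2).trans hb.2) ha.2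

lemma reachIn_walk {S : Finset V} {a b : V} (h : reachIn T S a b) (ha : a ∈ S) :
    ∃ p : T.Walk a b, ∀ x ∈ p.support, x ∈ S := by
  induction h with
  | refl => exact ⟨SimpleGraph.Walk.nil, by simpa using ha⟩
  | @tail x y h1 h2 ih =>
      obtain ⟨p, hp⟩ := ih
      refine ⟨p.concat h2.1, ?_⟩
      intro z hz
      simp only [SimpleGraph.Walk.support_concat, List.concat_eq_append, List.mem_append,
        List.mem_singleton] at hz
      rcases hz with hz | rfl
      · exact hp z hz
      · exact h2.2.2

/-- A leaf of the induced subtree on `S`. -/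
theorem exists_leaf (hT : T.IsTree) {S : Finset V} (hconn : connIn T S) (h2 : 1 < S.card) :
    ∃ ℓ ∈ S, ∃ s ∈ S, T.Adj ℓ s ∧ ∀ w ∈ S, T.Adj ℓ w → w = s := by
  have huniq := hT.existsUnique_path
  have W : ∀ a b : V, a ∈ S → b ∈ S →
      ∃ p : T.Walk a b, p.IsPath ∧ ∀ x ∈ p.support, x ∈ S := by
    intro a b ha hb
    obtain ⟨p, hp⟩ := reachIn_walk T (hconn a ha b hb) ha
    exact ⟨p.toPath, p.toPath.2, fun x hx => hp x (SimpleGraph.Walk.support_toPath_subset p hx)⟩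
  classical
  set g : V × V → ℕ := fun ab =>
    if h : ab.1 ∈ S ∧ ab.2 ∈ S then (W ab.1 ab.2 h.1 h.2).choose.length else 0 with hg
  obtain ⟨x0, hx0⟩ := Finset.card_pos.mp (lt_trans Nat.zero_lt_one h2)
  obtain ⟨ab, habS, hmax⟩ := Finset.exists_max_image (S ×ˢ S) g ⟨(x0, x0), by simp [hx0]⟩
  obtain ⟨ha, hb⟩ := Finset.mem_product.mp habS
  obtain ⟨p₀, hp, hpS⟩ := W ab.1 ab.2 ha hb
  have hmax' : ∀ (x y : V) (q : T.Walk x y), q.IsPath → (∀ z ∈ q.support, z ∈ S) →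
      q.length ≤ p₀.length := by
    intro x y q hq hqS
    have hx : x ∈ S := hqS _ q.start_mem_support
    have hy : y ∈ S := hqS _ q.end_mem_support
    obtain ⟨hq', hq'S⟩ := (W x y hx hy).choose_spec
    have h1 : q = (W x y hx hy).choose := (huniq x y).unique hq hq'
    have h2' : p₀ = (W ab.1 ab.2 ha hb).choose :=
      (huniq ab.1 ab.2).unique hp (W ab.1 ab.2 ha hb).choose_spec.1
    have hle := hmax (x, y) (Finset.mem_product.mpr ⟨hx, hy⟩)
    rw [hg] at hle
    simp only [dif_pos (And.intro hx hy), dif_pos (And.intro ha hb)] at hle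
    rw [h1, h2']
    exact hle
  have hlen : 0 < p₀.length := by
    obtain ⟨u, hu, w, hw, huw⟩ := Finset.one_lt_card.mp h2
    rcases Nat.eq_zero_or_pos p₀.length with h0 | h
    · exfalso
      have hab : ab.1 = ab.2 := SimpleGraph.Walk.eq_of_length_eq_zero h0
      have hex : ∃ y ∈ S, y ≠ ab.1 := by
        by_cases h1 : u = ab.1
        · exact ⟨w, hw, fun hc => huw (h1 ▸ hc ▸ rfl)⟩
        · exact ⟨u, hu, h1⟩
      obtain ⟨y, hyS, hy⟩ := hex
      obtain ⟨hqp, hqS⟩ := (W ab.1 y ha hyS).choose_spec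
      have h1 : 1 ≤ (W ab.1 y ha hyS).choose.length := by
        rcases Nat.eq_zero_or_pos (W ab.1 y ha hyS).choose.length with h0' | h'
        · exact absurd (SimpleGraph.Walk.eq_of_length_eq_zero h0').symm hy
        · exact h'
      have := hmax' ab.1 y _ hqp hqS
      omega
    · exact h
  set c := p₀.getVert 1 with hc
  have hadj : T.Adj ab.1 c := by
    have := SimpleGraph.Walk.adj_getVert_succ p₀ (i := 0) hlen
    rwa [SimpleGraph.Walk.getVert_zero] at this
  have hcmem : c ∈ p₀.support :=
    SimpleGraph.Walk.mem_support_iff_exists_getVert.mpr ⟨1, rfl, hlen⟩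
  refine ⟨ab.1, ha, c, hpS c hcmem, hadj, ?_⟩
  intro w hwS hadjw
  by_cases hwmem : w ∈ p₀.support
  · have htake := hp.takeUntil hwmem
    have hsingle : (SimpleGraph.Walk.cons hadjw SimpleGraph.Walk.nil).IsPath := by
      refine SimpleGraph.Walk.IsPath.cons SimpleGraph.Walk.IsPath.nil ?_
      simp [hadjw.ne]
    have heq : p₀.takeUntil w hwmem = SimpleGraph.Walk.cons hadjw SimpleGraph.Walk.nil :=
      (huniq ab.1 w).unique htake hsingle
    have hlen1 : (p₀.takeUntil w hwmem).length = 1 := by rw [heq]; simp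
    have hGV := SimpleGraph.Walk.getVert_append (p₀.takeUntil w hwmem) (p₀.dropUntil w hwmem) 1
    rw [SimpleGraph.Walk.take_spec] at hGV
    rw [hlen1] at hGV
    simp only [lt_irrefl, if_false] at hGV
    rw [hc, hGV]
    simp [SimpleGraph.Walk.getVert_zero]
  · exfalso
    have hP : (SimpleGraph.Walk.cons (hadjw.symm) p₀).IsPath :=
      SimpleGraph.Walk.IsPath.cons hp hwmem
    have hPS : ∀ z ∈ (SimpleGraph.Walk.cons (hadjw.symm) p₀).support, z ∈ S := by
      intro z hz
      rw [SimpleGraph.Walk.support_cons, List.mem_cons] at hz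
      rcases hz with rfl | hz
      · exact hwS
      · exact hpS z hz
    have := hmax' _ _ _ hP hPS
    simp only [SimpleGraph.Walk.length_cons] at this
    omega

def pmF (D : Finset V) : V → V := if h : pmOn T D then h.choose else id

lemma pmF_spec {D : Finset V} (h : pmOn T D) :
    ∀ v ∈ D, pmF T D v ∈ D ∧ T.Adj v (pmF T D v) ∧ pmF T D (pmF T D v) = v := by
  rw [pmF, dif_pos h]
  exact h.choose_spec

theorem strip {S : Finset V} {ℓ s : V} (hℓ : ℓ ∈ S) (hs : s ∈ S) (hadj : T.Adj ℓ s)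
    (hleaf : ∀ w ∈ S, T.Adj ℓ w → w = s) (hnp : ¬ pmOn T S) :
    ∃ v₀ ∈ S \ ({ℓ, s} : Finset V), ¬ pmOn T (comp T (S \ ({ℓ, s} : Finset V)) v₀) := by
  set S' := S \ ({ℓ, s} : Finset V) with hS'
  by_contra hcon
  push_neg at hcon
  apply hnp
  set f : V → V := fun x =>
    if x = ℓ then s else if x = s then ℓ
    else if x ∈ S' then pmF T (comp T S' x) x else x with hf
  have hℓs : ℓ ≠ s := hadj.ne
  have hmemS' : ∀ x, x ∈ S' ↔ x ∈ S ∧ x ≠ ℓ ∧ x ≠ s := by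
    intro x; rw [hS']; simp [Finset.mem_sdiff, Finset.mem_insert]
  have hfℓ : f ℓ = s := by simp [hf]
  have hfs : f s = ℓ := by simp [hf, hℓs.symm]
  refine ⟨f, ?_⟩
  intro v hv
  by_cases h1 : v = ℓ
  · subst h1
    rw [hfℓ, hfs]
    exact ⟨hs, hadj, rfl⟩
  by_cases h2 : v = s
  · subst h2
    rw [hfs, hfℓ]
    exact ⟨hℓ, hadj.symm, rfl⟩
  · have hvS' : v ∈ S' := (hmemS' v).mpr ⟨hv, h1, h2⟩
    set g : V → V := pmF T (comp T S' v) with hgdef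
    have hspec := pmF_spec T (hcon v hvS')
    have hvc : v ∈ comp T S' v := mem_comp_self T hvS'
    obtain ⟨hg1, hg2, hg3⟩ := hspec v hvc
    have hfv : f v = g v := by simp [hf, h1, h2, hvS', hgdef]
    have hgvS' : g v ∈ S' := comp_subset T hg1
    rcases (hmemS' (g v)).mp hgvS' with ⟨hgvS, hgv1, hgv2⟩
    have hcompeq : comp T S' (g v) = comp T S' v := comp_eq T hg1
    have hfgv : f (g v) = v := by
      rw [hf]
      simp only [if_neg hgv1, if_neg hgv2, if_pos hgvS', hcompeq]
      exact hg3
    rw [hfv, hfgv]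
    exact ⟨hgvS, hg2, rfl⟩

/-! ### Main lemma: Staller wins on a subtree without perfect matching -/

theorem staller_wins (hT : T.IsTree) :
    ∀ n : ℕ, ∀ S : Finset V, S.card ≤ n → S.Nonempty → connIn T S → ¬ pmOn T S →
      mbVal (hypIn T S) true ∅ Sᶜ ≠ ⊤ := by
  intro n
  induction n using Nat.strong_induction_on with
  | _ n ih =>
  intro S hcard hSne hconn hnp
  by_cases h2 : 1 < S.card
  · -- general case: find a leaf
    obtain ⟨ℓ, hℓ, s, hs, hadj, hleaf⟩ := exists_leaf T hT hconn h2
    obtain ⟨v₀, hv₀, hnpc⟩ := strip T hℓ hs hadj hleaf hnp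
    set S' := S \ ({ℓ, s} : Finset V) with hS'
    set C := comp T S' v₀ with hC
    have hCS' : C ⊆ S' := comp_subset T
    have hCS : C ⊆ S := hCS'.trans (Finset.sdiff_subset)
    have hsC : s ∉ C := fun h => by
      have := hCS' h; rw [hS'] at this; simp at this
    have hℓC : ℓ ∉ C := fun h => by
      have := hCS' h; rw [hS'] at this; simp at this
    have hv₀C : v₀ ∈ C := mem_comp_self T hv₀
    have hCcard : C.card < S.card := by
      apply Finset.card_lt_card
      exact ⟨hCS, fun hsub => hℓC (hsub hℓ)⟩
    have hCne : C.Nonempty := ⟨v₀, hv₀C⟩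
    have hIH : mbVal (hypIn T C) true ∅ Cᶜ ≠ ⊤ :=
      ih C.card (lt_of_lt_of_le hCcard hcard) C le_rfl hCne (connIn_comp T) hnpc
    have hℓs : ℓ ≠ s := hadj.ne
    -- now compute
    rw [mbVal_true]
    split_ifs with hwin
    · simp
    have hsavail : s ∈ univ \ ((∅ : Finset V) ∪ Sᶜ) := by simp [hs]
    apply ne_top_of_le_ne_top ?_ (iInf₂_le s hsavail)
    apply WithTop.add_ne_top.mpr
    refine ⟨ENat.one_ne_top, (?_ : (_ : ℕ∞) ≠ ⊤)⟩
    -- the position after Staller plays s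
    rw [mbVal_false]
    split_ifs with h0 hempty
    · simp
    · exfalso
      have : ℓ ∈ univ \ (insert s ∅ ∪ Sᶜ) := by simp [hℓ, hℓs]
      rw [hempty] at this
      exact Finset.notMem_empty _ this
    · -- Dominator's replies
      rw [← Finset.sup_eq_iSup, ← lt_top_iff_ne_top,
        Finset.sup_lt_iff (by simp : (⊥ : ℕ∞) < ⊤)]
      intro u hu
      have huS : u ∈ S := by
        simp only [mem_sdiff, mem_union, Finset.mem_insert, mem_univ, true_and, not_or,
          Finset.mem_compl, not_not] at hu
        tauto
      have hus : u ≠ s := by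
        simp only [mem_sdiff, mem_union, Finset.mem_insert, mem_univ, true_and, not_or,
          Finset.mem_compl, not_not] at hu
        tauto
      by_cases huℓ : u = ℓ
      · -- Dominator blocked the leaf: move to the component C
        subst huℓ
        have hsim : mbVal (hypIn T S) true (insert s ∅) (insert u Sᶜ)
            ≤ mbVal (hypIn T C) true ∅ Cᶜ := by
          apply mbVal_sim (hypIn T S) (hypIn T C) C
            ((univ \ (insert s ∅ ∪ insert u Sᶜ)).card) true (insert s ∅) (insert u Sᶜ) ∅ Cᶜ
            (le_refl ((univ \ (insert s ∅ ∪ insert u Sᶜ)).card))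
          · exact Finset.empty_subset _
          · intro x hx
            exfalso
            rcases Finset.mem_inter.mp hx with ⟨hx1, hx2⟩
            simp only [Finset.mem_insert, Finset.notMem_empty, or_false] at hx1
            exact hsC (hx1 ▸ hx2)
          · intro x hx
            exfalso
            rcases Finset.mem_inter.mp hx with ⟨hx1, hx2⟩
            rcases Finset.mem_insert.mp hx1 with h | h
            · exact hℓC (h ▸ hx2)
            · exact (Finset.mem_compl.mp h) (hCS hx2)
          · exact Finset.Subset.refl _
          · rintro f ⟨v, hvC, rfl⟩
            refine ⟨nbhdIn T S v, ⟨v, hCS hvC, rfl⟩, ?_⟩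
            intro x hx
            rcases (mem_nbhdIn T).mp hx with ⟨hor, hxS⟩
            rw [Finset.mem_union]
            by_cases hxs : x = s
            · right; simp [hxs]
            rcases hor with rfl | hvx
            · left; exact (mem_nbhdIn T).mpr ⟨Or.inl rfl, hvC⟩
            · have hxℓ : x ≠ u := by
                rintro rfl
                exact hsC (hleaf v (hCS hvC) hvx.symm ▸ hvC)
              have hxS' : x ∈ S' := by rw [hS']; simp [hxS, hxℓ, hxs]
              left
              exact (mem_nbhdIn T).mpr ⟨Or.inr hvx, comp_closed T hvC hvx hxS'⟩
        exact lt_of_le_of_lt hsim (lt_top_iff_ne_top.mpr hIH)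
      · -- Staller takes the leaf and wins
        rw [mbVal_true, if_neg h0]
        have hℓu : ℓ ≠ u := fun h => huℓ h.symm
        have hℓavail : ℓ ∈ univ \ (insert s ∅ ∪ insert u Sᶜ) := by
          simp [hℓ, hℓs, hℓu]
        refine lt_of_le_of_lt (iInf₂_le ℓ hℓavail) ?_
        have hzero : mbVal (hypIn T S) false (insert ℓ (insert s ∅)) (insert u Sᶜ) = 0 := by
          rw [mbVal_false, if_pos]
          refine ⟨nbhdIn T S ℓ, ⟨ℓ, hℓ, rfl⟩, ?_⟩
          intro x hx
          rcases (mem_nbhdIn T).mp hx with ⟨hor, hxS⟩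
          rcases hor with rfl | hadjx
          · simp
          · simp [hleaf x hxS hadjx]
        rw [hzero]
        exact lt_top_iff_ne_top.mpr (by simp)
  · -- singleton case
    obtain ⟨ℓ, hℓ⟩ := hSne
    have hS : S = {ℓ} := by
      obtain ⟨a, ha⟩ := Finset.card_eq_one.mp
        (le_antisymm (not_lt.mp h2) (Finset.card_pos.mpr ⟨ℓ, hℓ⟩))
      rw [ha] at hℓ ⊢
      rw [Finset.mem_singleton.mp hℓ]
    rw [mbVal_true]
    split_ifs with hwin
    · simp
    have hℓavail : ℓ ∈ univ \ ((∅ : Finset V) ∪ Sᶜ) := by simp [hℓ]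
    apply ne_top_of_le_ne_top ?_ (iInf₂_le ℓ hℓavail)
    have hzero : mbVal (hypIn T S) false (insert ℓ ∅) Sᶜ = 0 := by
      rw [mbVal_false, if_pos]
      refine ⟨nbhdIn T S ℓ, ⟨ℓ, hℓ, rfl⟩, ?_⟩
      intro x hx
      have := ((mem_nbhdIn T).mp hx).2
      rw [hS] at this
      simp [Finset.mem_singleton.mp this]
    rw [hzero]
    simp

lemma walk_reachIn {a b : V} (p : T.Walk a b) : reachIn T univ a b := by
  induction p with
  | nil => exact Relation.ReflTransGen.refl
  | cons h _ ih => exact Relation.ReflTransGen.head ⟨h, by simp⟩ ih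

end MBAux

end

open MBAux Finset

/-- A tree `T` has no perfect matching if and only if Staller has a winning
strategy in the Staller-start Maker–Breaker domination game on `T`, i.e.
`γ'_SMB(T) < ∞`. -/
theorem stmt_13 {V : Type} [Fintype V] (T : SimpleGraph V) (hT : T.IsTree) :
    (¬ ∃ M : T.Subgraph, M.IsPerfectMatching) ↔ gammaSMB' T < ⊤ := by
  have hEeq : nbhdHyp T = hypIn T univ := by
    ext e
    constructor
    · rintro ⟨v, rfl⟩
      exact ⟨v, mem_univ v, by simp [nbhdIn, closedNbhdFinset]⟩
    · rintro ⟨v, -, rfl⟩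
      exact ⟨v, by simp [nbhdIn, closedNbhdFinset]⟩
  constructor
  · intro hno
    have : Nonempty V := hT.isConnected.nonempty
    have hconn : connIn T univ := by
      intro v _ w _
      obtain ⟨p⟩ := hT.isConnected.preconnected v w
      exact walk_reachIn T p
    have hnp : ¬ pmOn T univ := by
      rintro ⟨f, hf⟩
      apply hno
      refine ⟨SimpleGraph.Subgraph.mk Set.univ (fun a b => T.Adj a b ∧ f a = b ∧ f b = a)
        (fun h => h.1) (fun h => Set.mem_univ _) ⟨fun a b h => ⟨h.1.symm, h.2.2, h.2.1⟩⟩,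
        ?_, fun v => trivial⟩
      intro v _
      obtain ⟨_, hadj, hinv⟩ := hf v (mem_univ v)
      refine ⟨f v, ⟨hadj, rfl, hinv⟩, ?_⟩
      rintro y ⟨_, h1, _⟩
      exact h1.symm
    have h' := staller_wins T hT univ.card univ le_rfl Finset.univ_nonempty hconn hnp
    rw [Finset.compl_univ] at h'
    rw [gammaSMB', hEeq, lt_top_iff_ne_top]
    exact h'
  · intro hlt hpm
    obtain ⟨M, hM⟩ := hpm
    -- extract pairing
    have hex : ∀ v : V, ∃! w, M.Adj v w := fun v => hM.1 (hM.2 v)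
    set f : V → V := fun v => (hex v).choose with hfdef
    have hadj : ∀ v, M.Adj v (f v) := fun v => (hex v).choose_spec.1
    have hinv : ∀ v, f (f v) = v :=
      fun v => ((hex (f v)).unique (hadj (f v)) (hadj v).symm)
    have hne : ∀ v, f v ≠ v := fun v => (M.adj_sub (hadj v)).ne'
    have hedge : ∀ e ∈ nbhdHyp T, ∃ v ∈ e, f v ∈ e := by
      rintro e ⟨u, rfl⟩
      refine ⟨u, by simp [closedNbhdFinset], ?_⟩
      simp only [closedNbhdFinset, Finset.mem_filter, mem_univ, true_and]
      exact Or.inr (M.adj_sub (hadj u))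
    have := (breaker_pairing (nbhdHyp T) f hinv hne hedge
      ((univ \ ((∅ : Finset V) ∪ ∅)).card) ∅ ∅ le_rfl).1
      ⟨Finset.disjoint_empty_left _, by simp⟩
    rw [gammaSMB'] at hlt
    rw [this] at hlt
    exact lt_irrefl _ hlt
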